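/- A bucket mechanism with exclusive buckets B_0, B_1, ..., B_k and joint bucket B has menu complexity at most 2·n^{k+1} and strong symmetric menu complexity at most n·2^{k+1}. -/
import Mathlib

/-- The purchasable sets of a bucket mechanism with exclusive buckets
`B0, Bs 0, ..., Bs (k-1)` and joint bucket `B`: at most one item per exclusive
bucket, and the joint bucket taken entirely or not at all. -/
def Purchasable {n k : ℕ} (B0 : Finset (Fin n)) (Bs : Fin k → Finset (Fin n))
    (B : Finset (Fin n)) : Set (Finset (Fin n)) :=
  {S | (S ∩ B0).card ≤ 1 ∧ (∀ i, (S ∩ Bs i).card ≤ 1) ∧ (B ⊆ S ∨ S ∩ B = ∅)}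

lemma ncard_le_card_of_injOn {α β : Type*} [Fintype β] (s : Set α) (f : α → β)
    (h : Set.InjOn f s) : s.ncard ≤ Fintype.card β := by
  rw [← Set.ncard_image_of_injOn h]
  have h1 : (f '' s).ncard ≤ (Set.univ : Set β).ncard :=
    Set.ncard_le_ncard (Set.subset_univ _) Set.finite_univ
  simpa [Set.ncard_univ, Nat.card_eq_fintype_card] using h1

noncomputable def enc {n : ℕ} (y : Fin n) (A : Finset (Fin n)) : Fin n :=
  if h : A.Nonempty then h.choose else y

lemma eq_singleton_choose {n : ℕ} {A : Finset (Fin n)} (h : A.Nonempty)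
    (h1 : A.card ≤ 1) : A = {h.choose} := by
  apply Finset.eq_singleton_iff_unique_mem.mpr
  exact ⟨h.choose_spec, fun x hx => Finset.card_le_one.mp h1 x hx _ h.choose_spec⟩

lemma enc_inj {n : ℕ} (D : Finset (Fin n)) (y : Fin n) (hy : y ∉ D)
    {A A' : Finset (Fin n)} (hA : A ⊆ D) (hA' : A' ⊆ D)
    (h1 : A.card ≤ 1) (h1' : A'.card ≤ 1) (he : enc y A = enc y A') : A = A' := by
  unfold enc at he
  by_cases h : A.Nonempty <;> by_cases h' : A'.Nonempty
  · rw [dif_pos h, dif_pos h'] at he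
    rw [eq_singleton_choose h h1, eq_singleton_choose h' h1', he]
  · rw [dif_pos h, dif_neg h'] at he
    exact absurd (hA (he ▸ h.choose_spec)) hy
  · rw [dif_neg h, dif_pos h'] at he
    exact absurd (hA' (he ▸ h'.choose_spec)) hy
  · rw [Finset.not_nonempty_iff_eq_empty.mp h, Finset.not_nonempty_iff_eq_empty.mp h']

noncomputable def encO {n : ℕ} (A : Finset (Fin n)) : Option (Fin n) :=
  if h : A.Nonempty then some h.choose else none

lemma encO_inj {n : ℕ} {A A' : Finset (Fin n)}
    (h1 : A.card ≤ 1) (h1' : A'.card ≤ 1) (he : encO A = encO A') : A = A' := by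
  unfold encO at he
  by_cases h : A.Nonempty <;> by_cases h' : A'.Nonempty
  · rw [dif_pos h, dif_pos h'] at he
    rw [eq_singleton_choose h h1, eq_singleton_choose h' h1',
      Option.some_injective _ he]
  · rw [dif_pos h, dif_neg h'] at he; simp at he
  · rw [dif_neg h, dif_pos h'] at he; simp at he
  · rw [Finset.not_nonempty_iff_eq_empty.mp h, Finset.not_nonempty_iff_eq_empty.mp h']

lemma decomp {n k : ℕ} {B0 : Finset (Fin n)} {Bs : Fin k → Finset (Fin n)}
    {B : Finset (Fin n)}
    (hcover : B0 ∪ B ∪ Finset.univ.biUnion Bs = Finset.univ) (S : Finset (Fin n)) :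
    S = (S ∩ B0) ∪ (S ∩ B) ∪ Finset.univ.biUnion (fun i => S ∩ Bs i) := by
  ext x
  have hx := Finset.mem_univ x
  rw [← hcover] at hx
  simp only [Finset.mem_union, Finset.mem_inter, Finset.mem_biUnion, Finset.mem_univ,
    true_and] at *
  tauto

/-- A bucket mechanism with exclusive buckets `B0, B1, ..., Bk` and joint bucket `B`
has menu complexity (number of distinct purchasable sets) at most `2·n^(k+1)` and
strong symmetric menu complexity (number of equivalence classes of purchasable sets
under permutations within each `Bs i`, recorded by `(S ∩ B0, (|S ∩ Bs i|)_i, S ∩ B)`)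
at most `n·2^(k+1)`. -/
theorem stmt8 {n k : ℕ} (hn : 1 ≤ n)
    (B0 : Finset (Fin n)) (Bs : Fin k → Finset (Fin n)) (B : Finset (Fin n))
    (hd0 : ∀ i, Disjoint B0 (Bs i)) (hdB0 : Disjoint B0 B)
    (hdBi : ∀ i, Disjoint (Bs i) B)
    (hdij : ∀ i j, i ≠ j → Disjoint (Bs i) (Bs j))
    (hcover : B0 ∪ B ∪ Finset.univ.biUnion Bs = Finset.univ) :
    Set.ncard (Purchasable B0 Bs B) ≤ 2 * n ^ (k + 1) ∧
    Set.ncard ((fun S : Finset (Fin n) =>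
        (S ∩ B0, fun i => (S ∩ Bs i).card, S ∩ B)) '' Purchasable B0 Bs B)
      ≤ n * 2 ^ (k + 1) := by
  have hnp : n ≤ n ^ (k + 1) := Nat.le_self_pow (by omega) n
  have h2p : 2 ≤ 2 ^ (k + 1) := Nat.le_self_pow (by omega) 2
  by_cases hA : B0 = Finset.univ ∨ ∃ j, Bs j = Finset.univ
  · -- degenerate case: some exclusive bucket is everything
    have hcard1 : ∀ S ∈ Purchasable B0 Bs B, S.card ≤ 1 := by
      intro S hS
      obtain ⟨h0, hi, _⟩ := hS
      rcases hA with h | ⟨j, hj⟩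
      · simpa [h] using h0
      · simpa [hj] using hi j
    have hinj : Set.InjOn encO (Purchasable B0 Bs B) := fun S hS T hT he =>
      encO_inj (hcard1 S hS) (hcard1 T hT) he
    have hP : (Purchasable B0 Bs B).ncard ≤ n + 1 := by
      have := ncard_le_card_of_injOn _ encO hinj
      simpa using this
    constructor
    · calc (Purchasable B0 Bs B).ncard ≤ n + 1 := hP
        _ ≤ 2 * n ^ (k + 1) := by omega
    · calc ((fun S : Finset (Fin n) =>
            (S ∩ B0, fun i => (S ∩ Bs i).card, S ∩ B)) '' Purchasable B0 Bs B).ncard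
          ≤ (Purchasable B0 Bs B).ncard := Set.ncard_image_le (Set.toFinite _)
        _ ≤ n + 1 := hP
        _ ≤ n * 2 ^ (k + 1) := by nlinarith
  · push_neg at hA
    obtain ⟨hB0u, hBsu⟩ := hA
    have hex : ∀ D : Finset (Fin n), D ≠ Finset.univ → ∃ y : Fin n, y ∉ D := by
      intro D hD
      by_contra h
      push_neg at h
      exact hD (Finset.eq_univ_iff_forall.mpr h)
    obtain ⟨y0, hy0⟩ := hex B0 hB0u
    have hys : ∀ i, ∃ y : Fin n, y ∉ Bs i := fun i => hex (Bs i) (hBsu i)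
    choose ys hysp using hys
    -- common fact: S ∩ B determined by whether B ⊆ S, for purchasable S
    have hinterB : ∀ S ∈ Purchasable B0 Bs B, (B ⊆ S → S ∩ B = B) ∧
        (¬ B ⊆ S → S ∩ B = ∅) := by
      intro S hS
      refine ⟨fun h => Finset.inter_eq_right.mpr h, fun h => ?_⟩
      rcases hS.2.2 with h' | h'
      · exact absurd h' h
      · exact h'
    constructor
    · -- menu complexity
      set φ : Finset (Fin n) → Fin n × (Fin k → Fin n) × Bool :=
        fun S => (enc y0 (S ∩ B0), fun i => enc (ys i) (S ∩ Bs i), decide (B ⊆ S))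
        with hφ
      have hinj : Set.InjOn φ (Purchasable B0 Bs B) := by
        intro S hS T hT he
        rw [hφ] at he
        simp only [Prod.mk.injEq] at he
        obtain ⟨he1, he2, he3⟩ := he
        have hSB0 : S ∩ B0 = T ∩ B0 :=
          enc_inj B0 y0 hy0 Finset.inter_subset_right Finset.inter_subset_right
            hS.1 hT.1 he1
        have hBsi : ∀ i, S ∩ Bs i = T ∩ Bs i := by
          intro i
          exact enc_inj (Bs i) (ys i) (hysp i) Finset.inter_subset_right
            Finset.inter_subset_right (hS.2.1 i) (hT.2.1 i) (congrFun he2 i)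
        have hflag : B ⊆ S ↔ B ⊆ T := decide_eq_decide.mp he3
        have hSB : S ∩ B = T ∩ B := by
          by_cases h : B ⊆ S
          · rw [(hinterB S hS).1 h, (hinterB T hT).1 (hflag.mp h)]
          · rw [(hinterB S hS).2 h, (hinterB T hT).2 (fun h' => h (hflag.mpr h'))]
        calc S = (S ∩ B0) ∪ (S ∩ B) ∪ Finset.univ.biUnion (fun i => S ∩ Bs i) :=
              decomp hcover S
          _ = (T ∩ B0) ∪ (T ∩ B) ∪ Finset.univ.biUnion (fun i => T ∩ Bs i) := by
              rw [hSB0, hSB]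
              congr 1
              exact Finset.biUnion_congr rfl (fun i _ => hBsi i)
          _ = T := (decomp hcover T).symm
      have := ncard_le_card_of_injOn _ φ hinj
      calc (Purchasable B0 Bs B).ncard
          ≤ Fintype.card (Fin n × (Fin k → Fin n) × Bool) := this
        _ = 2 * n ^ (k + 1) := by
            simp [Fintype.card_fun, pow_succ]
            ring
    · -- strong symmetric menu complexity
      set ψ : Finset (Fin n) → Finset (Fin n) × (Fin k → ℕ) × Finset (Fin n) :=
        fun S => (S ∩ B0, fun i => (S ∩ Bs i).card, S ∩ B) with hψ
      set g : Finset (Fin n) × (Fin k → ℕ) × Finset (Fin n) →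
          Fin n × (Fin k → Bool) × Bool :=
        fun p => (enc y0 p.1, fun i => decide (p.2.1 i = 1), decide p.2.2.Nonempty)
        with hg
      have hinj : Set.InjOn g (ψ '' Purchasable B0 Bs B) := by
        rintro p ⟨S, hS, rfl⟩ q ⟨T, hT, rfl⟩ he
        rw [hg, hψ] at he
        simp only [Prod.mk.injEq] at he
        obtain ⟨he1, he2, he3⟩ := he
        have hSB0 : S ∩ B0 = T ∩ B0 :=
          enc_inj B0 y0 hy0 Finset.inter_subset_right Finset.inter_subset_right
            hS.1 hT.1 he1
        have hcards : ∀ i, (S ∩ Bs i).card = (T ∩ Bs i).card := by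
          intro i
          have h1 := hS.2.1 i
          have h2 := hT.2.1 i
          have := congrFun he2 i
          simp only [decide_eq_decide] at this
          omega
        have hSB : S ∩ B = T ∩ B := by
          simp only [decide_eq_decide] at he3
          by_cases h : (S ∩ B).Nonempty
          · have h' : (T ∩ B).Nonempty := he3.mp h
            have hb1 : B ⊆ S := by
              rcases hS.2.2 with hh | hh
              · exact hh
              · exact absurd hh (Finset.nonempty_iff_ne_empty.mp h)
            have hb2 : B ⊆ T := by
              rcases hT.2.2 with hh | hh
              · exact hh
              · exact absurd hh (Finset.nonempty_iff_ne_empty.mp h')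
            rw [Finset.inter_eq_right.mpr hb1, Finset.inter_eq_right.mpr hb2]
          · have h' : ¬ (T ∩ B).Nonempty := fun hh => h (he3.mpr hh)
            rw [Finset.not_nonempty_iff_eq_empty.mp h,
              Finset.not_nonempty_iff_eq_empty.mp h']
        simp only [hψ, Prod.mk.injEq]
        refine ⟨hSB0, ?_, hSB⟩
        funext i
        exact hcards i
      have := ncard_le_card_of_injOn _ g hinj
      calc (ψ '' Purchasable B0 Bs B).ncard
          ≤ Fintype.card (Fin n × (Fin k → Bool) × Bool) := this
        _ = n * 2 ^ (k + 1) := by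
            simp [Fintype.card_fun, pow_succ]
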